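/- Let α₀ : ℙ³ ⇢ ℙ³ be given by [x₁:x₂:x₃:x₄] ↦ [x₁(x₂−x₄)(x₃−x₄) : x₄(x₂−x₄)(x₃−x₄) : x₄(x₂−x₁)(x₃−x₄) : x₄(x₂−x₄)(x₃−x₁)]. The common zero locus in ℙ³ of the four defining homogeneous polynomials (the indeterminacy set of α₀) equals the union of the six lines {x₁=x₄=0}, {x₂=x₄=0}, {x₃=x₄=0}, {x₁=x₂=x₄}, {x₁=x₃=x₄}, {x₂=x₃=x₄}. -/
import Mathlib


/-- The indeterminacy set of
`α₀([x₁:x₂:x₃:x₄]) = [x₁(x₂−x₄)(x₃−x₄) : x₄(x₂−x₄)(x₃−x₄) : x₄(x₂−x₁)(x₃−x₄) : x₄(x₂−x₄)(x₃−x₁)]`,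
i.e. the common zero locus in `ℙ³` of its four defining homogeneous polynomials,
is the union of the six lines `{x₁=x₄=0}`, `{x₂=x₄=0}`, `{x₃=x₄=0}`,
`{x₁=x₂=x₄}`, `{x₁=x₃=x₄}`, `{x₂=x₃=x₄}`. -/
theorem alpha0_indeterminacy_set (x : Fin 4 → ℂ) (hx : x ≠ 0) :
    (x 0 * (x 1 - x 3) * (x 2 - x 3) = 0 ∧
     x 3 * (x 1 - x 3) * (x 2 - x 3) = 0 ∧
     x 3 * (x 1 - x 0) * (x 2 - x 3) = 0 ∧
     x 3 * (x 1 - x 3) * (x 2 - x 0) = 0) ↔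
    ((x 0 = 0 ∧ x 3 = 0) ∨ (x 1 = 0 ∧ x 3 = 0) ∨ (x 2 = 0 ∧ x 3 = 0) ∨
     (x 0 = x 1 ∧ x 1 = x 3) ∨ (x 0 = x 2 ∧ x 2 = x 3) ∨ (x 1 = x 2 ∧ x 2 = x 3)) := by
  clear hx
  generalize x 0 = a
  generalize x 1 = b
  generalize x 2 = c
  generalize x 3 = d
  simp only [mul_eq_zero, sub_eq_zero]
  constructor
  · rintro ⟨(h1 | h1) | h1, (h2 | h2) | h2, (h3 | h3) | h3, (h4 | h4) | h4⟩ <;>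
      subst_vars <;> tauto
  · rintro (⟨h1, h2⟩ | ⟨h1, h2⟩ | ⟨h1, h2⟩ | ⟨h1, h2⟩ | ⟨h1, h2⟩ | ⟨h1, h2⟩) <;>
      subst_vars <;> tauto
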